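/- For all integers 0 ≤ k ≤ n, the number of nondecreasing parking functions (a_1, …, a_{n+1}) of length n+1 having exactly k indices i with a_i ≠ i is C_{n,k}. -/
import Mathlib

/-- Catalan's triangle: `C_{n,k} = ((n-k+1)/(n+1)) * binom(n+k, n)` (the division is exact). -/
def catalanTriangle (n k : ℕ) : ℕ := (n - k + 1) * (n + k).choose n / (n + 1)

/-- A nondecreasing parking function of length `m`, written as a monotone function
`a : Fin m → ℕ` of positive integers with `a i ≤ i + 1` (1-based: `a_i ≤ i`). -/
def IsNDParkingFunction (m : ℕ) (a : Fin m → ℕ) : Prop :=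
  Monotone a ∧ (∀ i, 1 ≤ a i) ∧ ∀ i : Fin m, a i ≤ (i : ℕ) + 1

/-- Recursive count of generalized nondecreasing parking functions. -/
def ctT : ℕ → ℕ → ℕ → ℕ
  | 0, _, k => if k = 0 then 1 else 0
  | m+1, 0, k => ctT m 1 k
  | m+1, c+1, k => ctT (m+1) c k + (if k = 0 then 0 else ctT m (c+2) (k-1))
  termination_by m c _ => (m, c)

/-- Generalized NDPF predicate with slack `c`. -/
def ctQ (m c : ℕ) (b : Fin m → ℕ) : Prop :=
  Monotone b ∧ (∀ t, 1 ≤ b t) ∧ ∀ t : Fin m, b t ≤ (t : ℕ) + 1 + c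

/-- Number of "unlucky" indices. -/
def ctU (m c : ℕ) (b : Fin m → ℕ) : ℕ :=
  (Finset.univ.filter fun t : Fin m => b t ≠ (t : ℕ) + 1 + c).card

lemma ctFinite (m c : ℕ) (P : (Fin m → ℕ) → Prop)
    (hP : ∀ b, P b → ∀ t : Fin m, b t ≤ (t : ℕ) + 1 + c) :
    Finite {b : Fin m → ℕ // P b} := by
  apply Finite.of_injective (β := Fin m → Fin (m + c + 2))
    (fun x t => ⟨x.1 t, lt_of_le_of_lt (hP x.1 x.2 t) (by omega)⟩)
  intro x y h
  ext t
  exact congrArg Fin.val (congrFun h t)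

lemma nat_card_split {α : Type*} (P R : α → Prop) [DecidablePred R]
    (h : Finite {x // P x}) :
    Nat.card {x // P x} =
      Nat.card {x // P x ∧ R x} + Nat.card {x // P x ∧ ¬ R x} := by
  haveI := h
  rw [← Nat.card_congr (Equiv.subtypeSubtypeEquivSubtypeInter P R),
      ← Nat.card_congr (Equiv.subtypeSubtypeEquivSubtypeInter P fun x => ¬ R x),
      ← Nat.card_sum]
  exact (Nat.card_congr (Equiv.sumCompl fun y : {x // P x} => R y.1)).symm

lemma card_filter_succ {m : ℕ} (p : Fin (m+1) → Prop) [DecidablePred p] :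
    (Finset.univ.filter p).card
      = (if p 0 then 1 else 0) + (Finset.univ.filter fun t : Fin m => p t.succ).card := by
  rw [Finset.card_filter, Finset.card_filter, Fin.sum_univ_succ]

lemma ctU_succ {m : ℕ} (c : ℕ) (b : Fin (m+1) → ℕ) :
    ctU (m+1) c b = (if b 0 = 1 + c then 0 else 1) + ctU m (c+1) (fun t => b t.succ) := by
  unfold ctU
  rw [card_filter_succ]
  congr 1
  · rcases eq_or_ne (b 0) (1 + c) with h | h <;> simp [h]
  · apply congrArg
    apply Finset.filter_congr
    intro t _
    simp only [Fin.val_succ]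
    constructor <;> intro <;> omega

/-- Decrement equivalence: sequences with `b 0 ≠ 1` at slack `c+1` correspond to
sequences at slack `c`. -/
def equivDec (m c k : ℕ) :
    {b : Fin (m+1) → ℕ // (ctQ (m+1) (c+1) b ∧ ctU (m+1) (c+1) b = k) ∧ ¬ b 0 = 1} ≃
    {b : Fin (m+1) → ℕ // ctQ (m+1) c b ∧ ctU (m+1) c b = k} where
  toFun x := ⟨fun t => x.1 t - 1, by
    obtain ⟨⟨⟨hm, h1, hle⟩, hu⟩, h0⟩ := x.2
    have h2 : ∀ t, 2 ≤ x.1 t := fun t => by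
      have := hm (Fin.zero_le t); have := h1 0; omega
    refine ⟨⟨fun i j hij => Nat.sub_le_sub_right (hm hij) 1,
      fun t => by dsimp only; have := h2 t; omega,
      fun t => by dsimp only; have := hle t; omega⟩, ?_⟩
    have heq : ctU (m+1) c (fun t => x.1 t - 1) = ctU (m+1) (c+1) x.1 := by
      unfold ctU
      apply congrArg
      apply Finset.filter_congr
      intro t _
      dsimp only
      have := h2 t
      constructor <;> intro <;> omega
    rw [heq, hu]⟩
  invFun y := ⟨fun t => y.1 t + 1, by
    obtain ⟨⟨hm, h1, hle⟩, hu⟩ := y.2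
    refine ⟨⟨⟨fun i j hij => Nat.add_le_add_right (hm hij) 1,
      fun t => by dsimp only; omega,
      fun t => by dsimp only; have := hle t; omega⟩, ?_⟩, by dsimp only; have := h1 0; omega⟩
    have heq : ctU (m+1) (c+1) (fun t => y.1 t + 1) = ctU (m+1) c y.1 := by
      unfold ctU
      apply congrArg
      apply Finset.filter_congr
      intro t _
      dsimp only
      constructor <;> intro <;> omega
    rw [heq, hu]⟩
  left_inv x := by
    apply Subtype.ext; funext t
    have h2 : 2 ≤ x.1 t := by
      obtain ⟨⟨⟨hm, h1, _⟩, _⟩, h0⟩ := x.2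
      have := hm (Fin.zero_le t); have := h1 0; omega
    simp; omega
  right_inv y := by
    apply Subtype.ext; funext t
    simp

/-- Stripping the first entry (which equals 1). -/
def equivStrip (m c k k' : ℕ)
    (h : ∀ u : ℕ, ((if (1:ℕ) = 1 + c then 0 else 1) + u = k ↔ u = k')) :
    {b : Fin (m+1) → ℕ // (ctQ (m+1) c b ∧ ctU (m+1) c b = k) ∧ b 0 = 1} ≃
    {b : Fin m → ℕ // ctQ m (c+1) b ∧ ctU m (c+1) b = k'} where
  toFun x := ⟨fun t => x.1 t.succ, by
    obtain ⟨⟨⟨hm, h1, hle⟩, hu⟩, h0⟩ := x.2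
    refine ⟨⟨fun i j hij => hm (Fin.succ_le_succ_iff.mpr hij), fun t => h1 _,
      fun t => by dsimp only; have := hle t.succ; rw [Fin.val_succ] at this; omega⟩, ?_⟩
    have hs := ctU_succ c x.1
    rw [hu, h0] at hs
    exact (h _).mp hs.symm⟩
  invFun y := ⟨Fin.cases 1 y.1, by
    obtain ⟨⟨hm, h1, hle⟩, hu⟩ := y.2
    have hb0 : (Fin.cases 1 y.1 : Fin (m+1) → ℕ) 0 = 1 := rfl
    have hbs : ∀ t : Fin m, (Fin.cases 1 y.1 : Fin (m+1) → ℕ) t.succ = y.1 t :=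
      fun t => by simp
    refine ⟨⟨⟨?_, ?_, ?_⟩, ?_⟩, hb0⟩
    · intro i j hij
      cases i using Fin.cases with
      | zero =>
        rw [hb0]
        cases j using Fin.cases with
        | zero => exact le_refl 1
        | succ j => rw [hbs]; exact h1 j
      | succ i =>
        cases j using Fin.cases with
        | zero => exact absurd (Fin.le_zero_iff.mp hij) (Fin.succ_ne_zero i)
        | succ j => rw [hbs, hbs]; exact hm (Fin.succ_le_succ_iff.mp hij)
    · intro t
      cases t using Fin.cases with
      | zero => exact le_refl 1
      | succ t => rw [hbs]; exact h1 t
    · intro t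
      cases t using Fin.cases with
      | zero => rw [hb0]; simp
      | succ t => rw [hbs]; have := hle t; rw [Fin.val_succ]; omega
    · rw [ctU_succ]
      simp only [Fin.cases_zero, Fin.cases_succ]
      rw [hu]
      exact (h k').mpr rfl⟩
  left_inv x := by
    apply Subtype.ext; funext t
    cases t using Fin.cases with
    | zero => simpa using x.2.2.symm
    | succ t => simp
  right_inv y := by
    apply Subtype.ext; funext t
    simp

lemma card_strip_zero (m c : ℕ) :
    Nat.card {b : Fin (m+1) → ℕ //
      (ctQ (m+1) (c+1) b ∧ ctU (m+1) (c+1) b = 0) ∧ b 0 = 1} = 0 := by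
  have hE : IsEmpty {b : Fin (m+1) → ℕ //
      (ctQ (m+1) (c+1) b ∧ ctU (m+1) (c+1) b = 0) ∧ b 0 = 1} := by
    refine ⟨fun x => ?_⟩
    obtain ⟨b, ⟨hq, hu⟩, h0⟩ := x
    unfold ctU at hu
    rw [Finset.card_eq_zero] at hu
    have hmem : (0 : Fin (m+1)) ∈
        Finset.univ.filter fun t : Fin (m+1) => b t ≠ (t : ℕ) + 1 + (c+1) :=
      Finset.mem_filter.mpr ⟨Finset.mem_univ _, by rw [h0]; simp⟩
    rw [hu] at hmem
    exact absurd hmem (Finset.notMem_empty _)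
  exact Nat.card_of_isEmpty

lemma card_b0ne_zero (m k : ℕ) :
    Nat.card {b : Fin (m+1) → ℕ //
      (ctQ (m+1) 0 b ∧ ctU (m+1) 0 b = k) ∧ ¬ b 0 = 1} = 0 := by
  have hE : IsEmpty {b : Fin (m+1) → ℕ //
      (ctQ (m+1) 0 b ∧ ctU (m+1) 0 b = k) ∧ ¬ b 0 = 1} := by
    refine ⟨fun x => ?_⟩
    obtain ⟨b, ⟨⟨hm, h1, hle⟩, hu⟩, h0⟩ := x
    have := h1 0
    have := hle 0
    simp at this
    omega
  exact Nat.card_of_isEmpty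

lemma card_ct : ∀ m c k : ℕ,
    Nat.card {b : Fin m → ℕ // ctQ m c b ∧ ctU m c b = k} = ctT m c k := by
  intro m
  induction m with
  | zero =>
    intro c k
    cases k with
    | zero =>
      haveI : Nonempty {b : Fin 0 → ℕ // ctQ 0 c b ∧ ctU 0 c b = 0} :=
        ⟨⟨fun t => t.elim0, ⟨fun i j _ => i.elim0, fun t => t.elim0, fun t => t.elim0⟩,
          by simp [ctU]⟩⟩
      haveI : Subsingleton {b : Fin 0 → ℕ // ctQ 0 c b ∧ ctU 0 c b = 0} :=
        ⟨fun a b => Subtype.ext (funext fun t => t.elim0)⟩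
      rw [Nat.card_unique]
      simp [ctT]
    | succ k =>
      haveI : IsEmpty {b : Fin 0 → ℕ // ctQ 0 c b ∧ ctU 0 c b = k + 1} := by
        refine ⟨fun x => ?_⟩
        have := x.2.2
        simp [ctU] at this
      rw [Nat.card_of_isEmpty]
      simp [ctT]
  | succ m ih =>
    intro c
    induction c with
    | zero =>
      intro k
      rw [nat_card_split (fun b => ctQ (m+1) 0 b ∧ ctU (m+1) 0 b = k) (fun b => b 0 = 1)
        (ctFinite (m+1) 0 _ (fun b hb => hb.1.2.2)),
        card_b0ne_zero,
        Nat.card_congr (equivStrip m 0 k k (fun u => by simp)),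
        ih 1 k]
      simp [ctT]
    | succ c ihc =>
      intro k
      rw [nat_card_split (fun b => ctQ (m+1) (c+1) b ∧ ctU (m+1) (c+1) b = k)
        (fun b => b 0 = 1)
        (ctFinite (m+1) (c+1) _ (fun b hb => hb.1.2.2)),
        Nat.card_congr (equivDec m c k), ihc k]
      cases k with
      | zero =>
        rw [card_strip_zero]
        simp [ctT]
      | succ k =>
        rw [Nat.card_congr (equivStrip m (c+1) (k+1) k
          (fun u => by rw [if_neg (by omega)]; omega)),
          ih (c+2) k]
        simp only [ctT, Nat.succ_ne_zero, if_false, Nat.add_sub_cancel]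
        exact Nat.add_comm _ _

lemma ctT_eq_zero : ∀ m c k : ℕ, m < k → ctT m c k = 0 := by
  intro m
  induction m with
  | zero => intro c k h; simp [ctT]; omega
  | succ m ih =>
    intro c
    induction c with
    | zero =>
      intro k h
      simp only [ctT]
      exact ih 1 k (by omega)
    | succ c ihc =>
      intro k h
      simp only [ctT]
      rw [ihc k h]
      cases k with
      | zero => omega
      | succ k =>
        rw [if_neg (Nat.succ_ne_zero k), Nat.add_sub_cancel, ih (c+2) k (by omega)]

lemma choose_le_succ_of (N r : ℕ) (h : 2 * r + 1 ≤ N) : N.choose r ≤ N.choose (r+1) := by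
  have key := Nat.choose_succ_right_eq N r
  have h2 : N.choose r * (r+1) ≤ N.choose r * (N - r) :=
    Nat.mul_le_mul_left _ (by omega)
  rw [← key] at h2
  exact Nat.le_of_mul_le_mul_right h2 (by omega)

lemma ctT_closed : ∀ m c k : ℕ, k ≤ m →
    ctT m c k = if k = 0 then 1 else ((m + c + k - 1).choose k - (m + c + k - 1).choose (k-1)) := by
  intro m
  induction m with
  | zero =>
    intro c k hk
    interval_cases k
    simp [ctT]
  | succ m ih =>
    intro c
    induction c with
    | zero =>
      intro k hk
      simp only [ctT]
      rcases Nat.lt_or_ge k (m+1) with h | h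
      · rw [ih 1 k (by omega)]
      · have hk1 : k = m + 1 := by omega
        subst hk1
        rw [ctT_eq_zero m 1 (m+1) (by omega)]
        rw [if_neg (by omega)]
        have h1 : m + 1 + 0 + (m + 1) - 1 = 2 * m + 1 := by omega
        rw [h1]
        have h2 : (2 * m + 1).choose (m + 1) = (2 * m + 1).choose m := by
          have := Nat.choose_symm (n := 2*m+1) (k := m) (by omega)
          have h3 : 2 * m + 1 - m = m + 1 := by omega
          rw [h3] at this
          omega
        have h4 : m + 1 - 1 = m := by omega
        rw [h4, h2]
        omega
    | succ c ihc =>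
      intro k hk
      simp only [ctT]
      cases k with
      | zero =>
        rw [ihc 0 hk]
        simp
      | succ k =>
        rw [ihc (k+1) hk]
        simp only [Nat.succ_ne_zero, ite_false, Nat.add_sub_cancel]
        rw [ih (c+2) k (by omega)]
        have hN1 : m + 1 + c + (k + 1) - 1 = m + c + k + 1 := by omega
        rw [hN1]
        clear hN1
        cases k with
        | zero =>
          simp only [if_pos rfl]
          have h1 : m + 1 + (c + 1) + (0 + 1) - 1 = m + c + 2 := by omega
          rw [h1]
          simp [Nat.choose_one_right]
        | succ j =>
          rw [if_neg (by omega)]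
          have e1 : j + 1 + 1 = j + 2 := rfl
          have e3 : j + 1 - 1 = j := rfl
          simp only [e1, e3]
          have h1 : m + 1 + (c + 1) + (j + 2) - 1 = m + c + j + 3 := by omega
          have h2 : m + (c + 2) + (j + 1) - 1 = m + c + j + 2 := by omega
          have hA : m + c + (j + 1) + 1 = m + c + j + 2 := by omega
          rw [h1, h2, hA]
          clear h1 h2 hA e1 e3
          have hp1 : (m+c+j+3).choose (j + 2) =
              (m+c+j+2).choose (j+1) + (m+c+j+2).choose (j + 2) :=
            Nat.choose_succ_succ' (m+c+j+2) (j+1)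
          have hp2 : (m+c+j+3).choose (j + 1) =
              (m+c+j+2).choose j + (m+c+j+2).choose (j + 1) :=
            Nat.choose_succ_succ' (m+c+j+2) j
          have hle1 : (m+c+j+2).choose (j+1) ≤ (m+c+j+2).choose (j+2) :=
            choose_le_succ_of (m+c+j+2) (j+1) (by omega)
          have hle2 : (m+c+j+2).choose j ≤ (m+c+j+2).choose (j+1) :=
            choose_le_succ_of (m+c+j+2) j (by omega)
          omega

lemma ctT_eq_catalanTriangle (n k : ℕ) (hk : k ≤ n) :
    ctT (n+1) 0 k = catalanTriangle n k := by
  rw [ctT_closed (n+1) 0 k (by omega)]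
  unfold catalanTriangle
  cases k with
  | zero =>
    simp [Nat.choose_self]
  | succ j =>
    rw [if_neg (by omega)]
    have hsym : (n + (j+1)).choose n = (n + (j+1)).choose (j+1) := by
      have := Nat.choose_symm (n := n + (j+1)) (k := n) (Nat.le_add_right _ _)
      have h3 : n + (j + 1) - n = j + 1 := by omega
      rw [h3] at this
      exact this.symm
    have key := Nat.choose_succ_right_eq (n + (j+1)) j
    have hnj : n + (j+1) - j = n + 1 := by omega
    rw [hnj] at key
    have hle : (n + (j+1)).choose j ≤ (n + (j+1)).choose (j+1) :=
      choose_le_succ_of _ j (by omega)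
    have hidx : n + 1 + 0 + (j + 1) - 1 = n + (j + 1) := by omega
    have hj1 : j + 1 - 1 = j := rfl
    rw [hidx, hj1, hsym]
    symm
    apply Nat.div_eq_of_eq_mul_left (by omega)
    have hcoef : n - (j+1) + 1 = n + 1 - (j+1) := by omega
    calc (n - (j+1) + 1) * (n + (j+1)).choose (j+1)
        = (n+1) * (n + (j+1)).choose (j+1) - (j+1) * (n + (j+1)).choose (j+1) := by
          rw [hcoef, Nat.sub_mul]
      _ = (n + (j+1)).choose (j+1) * (n+1) - (n + (j+1)).choose (j+1) * (j+1) := by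
          rw [Nat.mul_comm (n+1), Nat.mul_comm (j+1)]
      _ = (n + (j+1)).choose (j+1) * (n+1) - (n + (j+1)).choose j * (n+1) := by
          rw [key]
      _ = ((n + (j+1)).choose (j+1) - (n + (j+1)).choose j) * (n+1) :=
          (Nat.sub_mul _ _ _).symm

theorem card_ndpf_unlucky (n k : ℕ) (hk : k ≤ n) :
    Nat.card {a : Fin (n + 1) → ℕ // IsNDParkingFunction (n + 1) a ∧
        (Finset.univ.filter fun i : Fin (n + 1) => a i ≠ (i : ℕ) + 1).card = k}
      = catalanTriangle n k := by
  rw [← ctT_eq_catalanTriangle n k hk, ← card_ct (n+1) 0 k]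
  apply Nat.card_congr
  apply Equiv.subtypeEquivRight
  intro b
  unfold IsNDParkingFunction ctQ ctU
  simp
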